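/- Let f : ℝ^d → ℝ be twice continuously differentiable and μ-strongly convex (so ∇²f(x) ⪰ μI for all x), and suppose the Hessian of f is L-Lipschitz in spectral norm: ‖∇²f(a) − ∇²f(b)‖ ≤ L‖a − b‖. Let θ* be a minimizer of f (so ∇f(θ*) = 0) and define the Newton iterate θ⁺ = θ − (∇²f(θ))⁻¹ ∇f(θ). Then ‖θ⁺ − θ*‖² ≤ (2/μ²) ‖∇²f(θ) − ∇²f(θ*)‖² ‖θ − θ*‖² + (L²/(2μ²)) ‖θ − θ*‖⁴. -/

import Mathlib

open scoped RealInnerProductSpace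

lemma quad_aux (μ L A V x : ℝ) (hμ : 0 < μ) (hx : 0 ≤ x)
    (h : x ≤ μ⁻¹ * (A * V + L / 2 * V ^ 2)) :
    x ^ 2 ≤ 2 / μ ^ 2 * A ^ 2 * V ^ 2 + L ^ 2 / (2 * μ ^ 2) * V ^ 4 := by
  have hμ2 : (0:ℝ) < μ ^ 2 := by positivity
  have hsq : x ^ 2 ≤ (μ⁻¹ * (A * V + L / 2 * V ^ 2)) ^ 2 := by
    apply pow_le_pow_left₀ hx h
  have expand : (A * V + L / 2 * V ^ 2) ^ 2 ≤
      2 * (A * V) ^ 2 + 2 * (L / 2 * V ^ 2) ^ 2 := by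
    nlinarith [sq_nonneg (A * V - L / 2 * V ^ 2)]
  calc x ^ 2 ≤ (μ⁻¹ * (A * V + L / 2 * V ^ 2)) ^ 2 := hsq
    _ = (μ ^ 2)⁻¹ * (A * V + L / 2 * V ^ 2) ^ 2 := by rw [mul_pow, inv_pow]
    _ ≤ (μ ^ 2)⁻¹ * (2 * (A * V) ^ 2 + 2 * (L / 2 * V ^ 2) ^ 2) :=
        mul_le_mul_of_nonneg_left expand (inv_nonneg.mpr hμ2.le)
    _ = 2 / μ ^ 2 * A ^ 2 * V ^ 2 + L ^ 2 / (2 * μ ^ 2) * V ^ 4 := by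
        field_simp

/-- Newton-step error bound (inequality (17)): for a μ-strongly convex function with
L-Lipschitz Hessian, the Newton iterate satisfies
‖θ⁺ − θ*‖² ≤ (2/μ²)‖∇²f(θ) − ∇²f(θ*)‖²‖θ − θ*‖² + (L²/(2μ²))‖θ − θ*‖⁴. -/
theorem stmt_3 {d : ℕ} (f : EuclideanSpace ℝ (Fin d) → ℝ)
    (hf : ContDiff ℝ 2 f) (μ L : ℝ) (hμ : 0 < μ) (hL : 0 < L)
    (H : EuclideanSpace ℝ (Fin d) →
      EuclideanSpace ℝ (Fin d) →L[ℝ] EuclideanSpace ℝ (Fin d))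
    (hH : ∀ x, H x = fderiv ℝ (gradient f) x)
    (hconv : ∀ x v, μ * ‖v‖ ^ 2 ≤ ⟪H x v, v⟫)
    (hlip : ∀ a b, ‖H a - H b‖ ≤ L * ‖a - b‖)
    (θstar : EuclideanSpace ℝ (Fin d)) (hmin : gradient f θstar = 0)
    (θ θplus : EuclideanSpace ℝ (Fin d))
    (hplus : θplus = θ - Ring.inverse (H θ) (gradient f θ)) :
    ‖θplus - θstar‖ ^ 2 ≤
      2 / μ ^ 2 * ‖H θ - H θstar‖ ^ 2 * ‖θ - θstar‖ ^ 2 +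
        L ^ 2 / (2 * μ ^ 2) * ‖θ - θstar‖ ^ 4 := by
  set v := θ - θstar with hv
  -- gradient is C¹ with derivative H
  have hgcd : ContDiff ℝ 1 (gradient f) := by
    have : gradient f = fun x => (InnerProductSpace.toDual ℝ _).symm (fderiv ℝ f x) := rfl
    rw [this]
    exact (InnerProductSpace.toDual ℝ _).symm.contDiff.comp (hf.fderiv_right (le_refl 2))
  have hgdiff : Differentiable ℝ (gradient f) := hgcd.differentiable one_ne_zero
  have hfd : ∀ x, HasFDerivAt (gradient f) (H x) x := fun x => by
    rw [hH x]; exact (hgdiff x).hasFDerivAt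
  -- coercivity: μ‖u‖ ≤ ‖H x u‖
  have hcoer : ∀ x u, μ * ‖u‖ ≤ ‖H x u‖ := by
    intro x u
    rcases eq_or_ne u 0 with rfl | hu
    · simp
    · have h1 := hconv x u
      have h2 : ⟪H x u, u⟫ ≤ ‖H x u‖ * ‖u‖ := real_inner_le_norm _ _
      have hupos : 0 < ‖u‖ := norm_pos_iff.mpr hu
      nlinarith
  -- H θ is a unit
  have hinj : Function.Injective (H θ) := by
    intro a b hab
    have : μ * ‖a - b‖ ≤ ‖H θ (a - b)‖ := hcoer θ (a - b)
    rw [map_sub, hab, sub_self, norm_zero] at this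
    have : ‖a - b‖ ≤ 0 := by nlinarith
    have := le_antisymm this (norm_nonneg _)
    rwa [norm_eq_zero, sub_eq_zero] at this
  have hbij : Function.Bijective ((H θ).toLinearMap) :=
    ⟨hinj, LinearMap.injective_iff_surjective.mp hinj⟩
  let e₀ : EuclideanSpace ℝ (Fin d) ≃ₗ[ℝ] EuclideanSpace ℝ (Fin d) :=
    LinearEquiv.ofBijective (H θ).toLinearMap hbij
  let e : EuclideanSpace ℝ (Fin d) ≃L[ℝ] EuclideanSpace ℝ (Fin d) :=
    e₀.toContinuousLinearEquiv
  have he : ∀ x, e x = H θ x := fun x => rfl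
  have hc1 : H θ * (e.symm : _ →L[ℝ] _) = 1 := by
    apply ContinuousLinearMap.ext
    intro x
    rw [ContinuousLinearMap.mul_apply, ContinuousLinearMap.one_apply]
    rw [← he]; exact e.apply_symm_apply x
  have hc2 : (e.symm : _ →L[ℝ] _) * H θ = 1 := by
    apply ContinuousLinearMap.ext
    intro x
    rw [ContinuousLinearMap.mul_apply, ContinuousLinearMap.one_apply]
    rw [← he]; exact e.symm_apply_apply x
  have hringinv : ∀ w, Ring.inverse (H θ) w = e.symm w := by
    intro w
    have := Ring.inverse_unit (⟨H θ, (e.symm : _ →L[ℝ] _), hc1, hc2⟩ :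
        (EuclideanSpace ℝ (Fin d) →L[ℝ] EuclideanSpace ℝ (Fin d))ˣ)
    rw [this]; rfl
  have hinvbound : ∀ w, ‖e.symm w‖ ≤ μ⁻¹ * ‖w‖ := by
    intro w
    have h1 : μ * ‖e.symm w‖ ≤ ‖H θ (e.symm w)‖ := hcoer θ _
    rw [← he, e.apply_symm_apply] at h1
    rw [inv_mul_eq_div, le_div_iff₀ hμ]
    linarith
  -- Taylor bound: ‖gradient f θ - H θstar v‖ ≤ L/2 ‖v‖²
  have key : ‖gradient f θ - H θstar v‖ ≤ L / 2 * ‖v‖ ^ 2 := by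
    set h : ℝ → EuclideanSpace ℝ (Fin d) :=
      fun t => gradient f (θstar + t • v) - t • (H θstar v) with hh
    have hline : ∀ t : ℝ, HasDerivAt (fun t : ℝ => θstar + t • v) v t := fun t => by
      simpa using ((hasDerivAt_id t).smul_const v).const_add θstar
    have hht : ∀ t : ℝ, HasDerivAt h (H (θstar + t • v) v - H θstar v) t := by
      intro t
      have h2 : HasDerivAt (fun t : ℝ => t • (H θstar v)) (H θstar v) t := by
        simpa using (hasDerivAt_id t).smul_const (H θstar v)
      exact ((hfd (θstar + t • v)).comp_hasDerivAt t (hline t)).sub h2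
    have hB : ∀ t : ℝ, HasDerivAt (fun t => L * ‖v‖ ^ 2 * (t ^ 2 / 2))
        (L * ‖v‖ ^ 2 * t) t := by
      intro t
      have := ((hasDerivAt_pow 2 t).div_const 2).const_mul (L * ‖v‖ ^ 2)
      convert this using 1
      · rfl
      · rfl
      · norm_num
    have bound : ∀ t ∈ Set.Ico (0:ℝ) 1,
        ‖H (θstar + t • v) v - H θstar v‖ ≤ L * ‖v‖ ^ 2 * t := by
      intro t ht
      have h1 : ‖(H (θstar + t • v) - H θstar) v‖ ≤ ‖H (θstar + t • v) - H θstar‖ * ‖v‖ :=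
        (H (θstar + t • v) - H θstar).le_opNorm v
      have h2 : ‖H (θstar + t • v) - H θstar‖ ≤ L * ‖θstar + t • v - θstar‖ := hlip _ _
      have h3 : ‖θstar + t • v - θstar‖ = t * ‖v‖ := by
        rw [add_sub_cancel_left, norm_smul, Real.norm_eq_abs, abs_of_nonneg ht.1]
      rw [ContinuousLinearMap.sub_apply] at h1
      calc ‖H (θstar + t • v) v - H θstar v‖ ≤ ‖H (θstar + t • v) - H θstar‖ * ‖v‖ := h1
        _ ≤ L * (t * ‖v‖) * ‖v‖ := by rw [← h3]; exact mul_le_mul_of_nonneg_right h2 (norm_nonneg _)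
        _ = L * ‖v‖ ^ 2 * t := by ring
    have ha : ‖h 0‖ ≤ L * ‖v‖ ^ 2 * ((0:ℝ) ^ 2 / 2) := by
      simp [hh, hmin]
    have := image_norm_le_of_norm_deriv_right_le_deriv_boundary
      (f := h) (a := 0) (b := 1) (f' := fun t => H (θstar + t • v) v - H θstar v)
      (fun t _ => (hht t).continuousAt.continuousWithinAt)
      (fun t _ => (hht t).hasDerivWithinAt) ha hB bound
      (Set.right_mem_Icc.mpr zero_le_one)
    have h1 : h 1 = gradient f θ - H θstar v := by
      simp [hh, hv]
    rw [h1] at this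
    calc ‖gradient f θ - H θstar v‖ ≤ L * ‖v‖ ^ 2 * ((1:ℝ) ^ 2 / 2) := this
      _ = L / 2 * ‖v‖ ^ 2 := by ring
  -- assemble
  have herr : θplus - θstar = e.symm (H θ v - gradient f θ) := by
    rw [hplus, hringinv]
    have : e.symm (H θ v) = v := by
      rw [← he]; exact e.symm_apply_apply v
    rw [map_sub, this, hv]
    abel
  have hnorm1 : ‖H θ v - gradient f θ‖ ≤ ‖H θ - H θstar‖ * ‖v‖ + L / 2 * ‖v‖ ^ 2 := by
    have hsplit : H θ v - gradient f θ = (H θ - H θstar) v - (gradient f θ - H θstar v) := by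
      rw [ContinuousLinearMap.sub_apply]; abel
    rw [hsplit]
    refine (norm_sub_le _ _).trans (add_le_add ((H θ - H θstar).le_opNorm v) key)
  have hfinal : ‖θplus - θstar‖ ≤ μ⁻¹ * (‖H θ - H θstar‖ * ‖v‖ + L / 2 * ‖v‖ ^ 2) := by
    rw [herr]
    exact (hinvbound _).trans (mul_le_mul_of_nonneg_left hnorm1 (inv_nonneg.mpr hμ.le))
  exact quad_aux μ L ‖H θ - H θstar‖ ‖v‖ ‖θplus - θstar‖ hμ (norm_nonneg _) hfinal
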